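/- Let R be a commutative ring and A ∈ M₂(R) unimodular such that A is weakly determinant liftable and det(A) is not a zero divisor. Then there exists (x,y,z,w) ∈ R⁴ with 1 − ax − by − cz − dw + (ad−bc)(xw − yz) = 0, where A = [[a,b],[c,d]]. -/
import Mathlib


open Matrix

theorem stmt12 {R : Type*} [CommRing R] (a b c d : R)
    (hA : Ideal.span {a, b, c, d} = (⊤ : Ideal R))
    (hnz : ∀ s : R, (a * d - b * c) * s = 0 → s = 0)
    (hw : ∃ B : Matrix (Fin 2) (Fin 2) R,
      (∀ i j, B i j - (!![a, b; c, d] : Matrix (Fin 2) (Fin 2) R) i j ∈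
        Ideal.span {a * d - b * c}) ∧ B.det = 0) :
    ∃ x y z w : R,
      1 - a * x - b * y - c * z - d * w + (a * d - b * c) * (x * w - y * z) = 0 := by
  obtain ⟨B, hmem, hdet⟩ := hw
  obtain ⟨x, hx⟩ := Ideal.mem_span_singleton.mp (hmem 0 0)
  obtain ⟨y, hy⟩ := Ideal.mem_span_singleton.mp (hmem 0 1)
  obtain ⟨z, hz⟩ := Ideal.mem_span_singleton.mp (hmem 1 0)
  obtain ⟨w, hw'⟩ := Ideal.mem_span_singleton.mp (hmem 1 1)
  norm_num [Matrix.cons_val_zero, Matrix.cons_val_one, Matrix.head_cons] at hx hy hz hw'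
  rw [Matrix.det_fin_two] at hdet
  have e00 : B 0 0 = a + (a * d - b * c) * x := by linear_combination hx
  have e01 : B 0 1 = b + (a * d - b * c) * y := by linear_combination hy
  have e10 : B 1 0 = c + (a * d - b * c) * z := by linear_combination hz
  have e11 : B 1 1 = d + (a * d - b * c) * w := by linear_combination hw'
  rw [e00, e01, e10, e11] at hdet
  exact ⟨-w, z, y, -x, hnz _ (by linear_combination hdet)⟩
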